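/- For any three pairwise distinct index triples with strictly positive data p̂₁(t), p̂₂(t) for t ∈ {t₁,t₂,t₃} in general position (no two of the points (log p̂₁(t), log p̂₂(t)) equal and the three points not collinear with slope pattern forcing identically zero determinant), there exists at most one ρ ∈ [−1,0) ∪ (0,∞) such that det [[1,1,1],[p̂₁(t₁)^{−ρ}, p̂₁(t₂)^{−ρ}, p̂₁(t₃)^{−ρ}],[p̂₂(t₁)^{−ρ}, p̂₂(t₂)^{−ρ}, p̂₂(t₃)^{−ρ}]] = 0. -/

import Mathlib

open Matrix Real

lemma collinear_of_line (S : Set (ℝ × ℝ)) (p d : ℝ × ℝ)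
    (h : ∀ x ∈ S, ∃ r : ℝ, x = r • d + p) : Collinear ℝ S := by
  rw [collinear_iff_exists_forall_eq_smul_vadd]
  exact ⟨p, d, fun x hx => (h x hx).imp fun r hr => hr⟩

lemma relation_of_det (u v : Fin 3 → ℝ) (ρ : ℝ) (hρ : ρ ≠ 0)
    (hnocol : ¬ Collinear ℝ {x : ℝ × ℝ | ∃ t : Fin 3, x = (u t, v t)})
    (hdet : Matrix.det !![1, 1, 1;
        Real.exp (-ρ * u 0), Real.exp (-ρ * u 1), Real.exp (-ρ * u 2);
        Real.exp (-ρ * v 0), Real.exp (-ρ * v 1), Real.exp (-ρ * v 2)] = 0) :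
    ∃ A B : ℝ, A ≠ 0 ∧ B ≠ 0 ∧
      ∀ t, Real.exp (-ρ * v t) = A + B * Real.exp (-ρ * u t) := by
  obtain ⟨w, hw0, hw⟩ := Matrix.exists_vecMul_eq_zero_iff.mpr hdet
  set α := w 0 with hα
  set β := w 1 with hβ
  set γ := w 2 with hγ
  have heq : ∀ t : Fin 3, α + β * Real.exp (-ρ * u t) + γ * Real.exp (-ρ * v t) = 0 := by
    intro t
    have := congrFun hw t
    fin_cases t <;>
      simpa [Matrix.vecMul, dotProduct, Fin.sum_univ_three, mul_comm] using this
  -- helper: exp injectivity with slope ρ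
  have expinj : ∀ x y : ℝ, Real.exp (-ρ * x) = Real.exp (-ρ * y) → x = y := by
    intro x y hxy
    have := Real.exp_injective hxy
    have hρ' : -ρ ≠ 0 := neg_ne_zero.mpr hρ
    exact mul_left_cancel₀ hρ' this
  by_cases hγ0 : γ = 0
  · by_cases hβ0 : β = 0
    · exfalso
      have hα0 : α = 0 := by have := heq 0; rw [hγ0, hβ0] at this; linarith
      apply hw0
      funext i
      fin_cases i
      · exact hα0
      · exact hβ0
      · exact hγ0
    · -- u constant ⇒ collinear
      exfalso; apply hnocol
      have hu : ∀ t : Fin 3, u t = u 0 := by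
        intro t
        apply expinj
        have h1 := heq t; have h2 := heq 0
        rw [hγ0] at h1 h2
        have : β * Real.exp (-ρ * u t) = β * Real.exp (-ρ * u 0) := by linarith
        exact mul_left_cancel₀ hβ0 this
      apply collinear_of_line _ (u 0, 0) (0, 1)
      rintro x ⟨t, rfl⟩
      exact ⟨v t, by simp [hu t, Prod.ext_iff]⟩
  · by_cases hβ0 : β = 0
    · by_cases hα0 : α = 0
      · exfalso
        have h1 := heq 0
        rw [hα0, hβ0] at h1
        have : γ * Real.exp (-ρ * v 0) ≠ 0 := mul_ne_zero hγ0 (Real.exp_ne_zero _)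
        simp at h1; tauto
      · -- v constant ⇒ collinear
        exfalso; apply hnocol
        have hv : ∀ t : Fin 3, v t = v 0 := by
          intro t
          apply expinj
          have h1 := heq t; have h2 := heq 0
          rw [hβ0] at h1 h2
          have : γ * Real.exp (-ρ * v t) = γ * Real.exp (-ρ * v 0) := by linarith
          exact mul_left_cancel₀ hγ0 this
        apply collinear_of_line _ (0, v 0) (1, 0)
        rintro x ⟨t, rfl⟩
        exact ⟨u t, by simp [hv t, Prod.ext_iff]⟩
    · by_cases hα0 : α = 0
      · -- slope-one line
        exfalso; apply hnocol
        set C : ℝ := -β / γ with hC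
        have hrel : ∀ t : Fin 3, Real.exp (-ρ * v t) = C * Real.exp (-ρ * u t) := by
          intro t
          have h1 := heq t; rw [hα0] at h1
          rw [hC, div_mul_eq_mul_div, eq_div_iff hγ0]
          linear_combination h1
        have hCpos : 0 < C := by
          have := hrel 0
          have h1 : 0 < Real.exp (-ρ * v 0) := Real.exp_pos _
          have h2 : 0 < Real.exp (-ρ * u 0) := Real.exp_pos _
          nlinarith
        have hvu : ∀ t : Fin 3, v t = u t + (Real.log C) / (-ρ) := by
          intro t
          apply expinj
          rw [hrel t, ← Real.exp_log hCpos, ← Real.exp_add]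
          ring_nf
          congr 1
          field_simp
          simp only [Real.log_exp]
          ring
        apply collinear_of_line _ (0, Real.log C / (-ρ)) (1, 1)
        rintro x ⟨t, rfl⟩
        exact ⟨u t, by simp [hvu t, Prod.ext_iff]⟩
      · refine ⟨-α / γ, -β / γ, by simp [hα0, hγ0], by simp [hβ0, hγ0], fun t => ?_⟩
        have h1 := heq t
        have h2 : Real.exp (-ρ * v t) = (-α - β * Real.exp (-ρ * u t)) / γ := by
          rw [eq_div_iff hγ0]
          linear_combination h1
        rw [h2]; ring

lemma sort3 (a b c : ℝ) (hab : a ≠ b) (hac : a ≠ c) (hbc : b ≠ c) :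
    ∃ x y z : ℝ, x < y ∧ y < z ∧
      (x = a ∨ x = b ∨ x = c) ∧ (y = a ∨ y = b ∨ y = c) ∧ (z = a ∨ z = b ∨ z = c) := by
  rcases hab.lt_or_gt with h1 | h1 <;> rcases hac.lt_or_gt with h2 | h2 <;>
    rcases hbc.lt_or_gt with h3 | h3
  · exact ⟨a, b, c, by linarith, by linarith, by tauto, by tauto, by tauto⟩
  · exact ⟨a, c, b, by linarith, by linarith, by tauto, by tauto, by tauto⟩
  · exact ⟨c, a, b, by linarith, by linarith, by tauto, by tauto, by tauto⟩
  · exact ⟨c, a, b, by linarith, by linarith, by tauto, by tauto, by tauto⟩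
  · exact ⟨b, a, c, by linarith, by linarith, by tauto, by tauto, by tauto⟩
  · exact ⟨b, a, c, by linarith, by linarith, by tauto, by tauto, by tauto⟩
  · exact ⟨b, c, a, by linarith, by linarith, by tauto, by tauto, by tauto⟩
  · exact ⟨c, b, a, by linarith, by linarith, by tauto, by tauto, by tauto⟩

lemma pos_between {A B ρ x1 x3 : ℝ} (x : ℝ)
    (h1 : 0 < A + B * Real.exp (-ρ * x1)) (h3 : 0 < A + B * Real.exp (-ρ * x3))
    (hx1 : x1 ≤ x) (hx3 : x ≤ x3) : 0 < A + B * Real.exp (-ρ * x) := by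
  rcases le_or_gt 0 B with hB | hB <;> rcases le_or_gt 0 ρ with hρ | hρ
  · have h : Real.exp (-ρ * x3) ≤ Real.exp (-ρ * x) := Real.exp_le_exp.mpr (by nlinarith)
    nlinarith
  · have h : Real.exp (-ρ * x1) ≤ Real.exp (-ρ * x) := Real.exp_le_exp.mpr (by nlinarith)
    nlinarith
  · have h : Real.exp (-ρ * x) ≤ Real.exp (-ρ * x1) := Real.exp_le_exp.mpr (by nlinarith)
    nlinarith
  · have h : Real.exp (-ρ * x) ≤ Real.exp (-ρ * x3) := Real.exp_le_exp.mpr (by nlinarith)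
    nlinarith

lemma no_two_rho (u v : Fin 3 → ℝ) (huinj : ∀ t t' : Fin 3, t ≠ t' → u t ≠ u t')
    (ρ ρ' A B A' B' : ℝ) (hρ : ρ ≠ 0) (hρ'' : ρ' ≠ 0) (hne : ρ ≠ ρ')
    (hA : A ≠ 0) (hB : B ≠ 0) (hA' : A' ≠ 0) (hB' : B' ≠ 0)
    (hrel : ∀ t, Real.exp (-ρ * v t) = A + B * Real.exp (-ρ * u t))
    (hrel' : ∀ t, Real.exp (-ρ' * v t) = A' + B' * Real.exp (-ρ' * u t)) : False := by
  set f1 : ℝ → ℝ := fun x => A + B * Real.exp (-ρ * x) with hf1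
  set f2 : ℝ → ℝ := fun x => A' + B' * Real.exp (-ρ' * x) with hf2
  set h : ℝ → ℝ := fun x => -(1/ρ) * Real.log (f1 x) + (1/ρ') * Real.log (f2 x) with hh
  set hd : ℝ → ℝ := fun x => B * Real.exp (-ρ * x) / f1 x - B' * Real.exp (-ρ' * x) / f2 x
    with hhd
  -- values at u t
  have hpos1 : ∀ t, 0 < f1 (u t) := fun t => by rw [hf1]; simp only [← hrel t]; positivity
  have hpos2 : ∀ t, 0 < f2 (u t) := fun t => by rw [hf2]; simp only [← hrel' t]; positivity
  have hzero : ∀ t, h (u t) = 0 := by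
    intro t
    rw [hh]
    simp only [hf1, hf2, ← hrel t, ← hrel' t, Real.log_exp]
    field_simp
    ring
  -- derivative
  have hder : ∀ x : ℝ, f1 x ≠ 0 → f2 x ≠ 0 → HasDerivAt h (hd x) x := by
    intro x h1 h2
    have d1 : HasDerivAt f1 (B * (Real.exp (-ρ * x) * -ρ)) x := by
      exact ((((hasDerivAt_id x).const_mul (-ρ)).exp.const_mul B).const_add A).congr_deriv
        (by simp only [id_eq]; ring)
    have d2 : HasDerivAt f2 (B' * (Real.exp (-ρ' * x) * -ρ')) x := by
      exact ((((hasDerivAt_id x).const_mul (-ρ')).exp.const_mul B').const_add A').congr_deriv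
        (by simp only [id_eq]; ring)
    have := ((d1.log h1).const_mul (-(1/ρ))).add ((d2.log h2).const_mul (1/ρ'))
    refine this.congr_deriv ?_
    rw [hhd]
    field_simp
    ring
  -- sorted points
  obtain ⟨x1, x2, x3, h12, h23, m1, m2, m3⟩ :=
    sort3 (u 0) (u 1) (u 2) (huinj 0 1 (by decide)) (huinj 0 2 (by decide))
      (huinj 1 2 (by decide))
  have key : ∀ x : ℝ, (x = u 0 ∨ x = u 1 ∨ x = u 2) →
      0 < f1 x ∧ 0 < f2 x ∧ h x = 0 := by
    rintro x (rfl | rfl | rfl)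
    exacts [⟨hpos1 0, hpos2 0, hzero 0⟩, ⟨hpos1 1, hpos2 1, hzero 1⟩,
      ⟨hpos1 2, hpos2 2, hzero 2⟩]
  obtain ⟨p11, p21, z1⟩ := key x1 m1
  obtain ⟨p12, p22, z2⟩ := key x2 m2
  obtain ⟨p13, p23, z3⟩ := key x3 m3
  have posI1 : ∀ x ∈ Set.Icc x1 x3, 0 < f1 x := fun x hx =>
    pos_between x p11 p13 hx.1 hx.2
  have posI2 : ∀ x ∈ Set.Icc x1 x3, 0 < f2 x := fun x hx =>
    pos_between x p21 p23 hx.1 hx.2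
  have hderI : ∀ x ∈ Set.Icc x1 x3, HasDerivAt h (hd x) x := fun x hx =>
    hder x (posI1 x hx).ne' (posI2 x hx).ne'
  have hcont : ContinuousOn h (Set.Icc x1 x3) := fun x hx =>
    (hderI x hx).continuousAt.continuousWithinAt
  -- Rolle twice
  obtain ⟨c1, hc1, hdc1⟩ := exists_hasDerivAt_eq_zero h12
    (hcont.mono (Set.Icc_subset_Icc le_rfl h23.le)) (by rw [z1, z2])
    (fun x hx => hderI x ⟨hx.1.le, hx.2.le.trans h23.le⟩)
  obtain ⟨c2, hc2, hdc2⟩ := exists_hasDerivAt_eq_zero h23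
    (hcont.mono (Set.Icc_subset_Icc h12.le le_rfl)) (by rw [z2, z3])
    (fun x hx => hderI x ⟨h12.le.trans hx.1.le, hx.2.le⟩)
  -- extract the key identity at each critical point
  have crit : ∀ c : ℝ, c ∈ Set.Icc x1 x3 → hd c = 0 →
      B * A' * Real.exp (-ρ * c) = B' * A * Real.exp (-ρ' * c) := by
    intro c hc hdc
    have p1 := posI1 c hc
    have p2 := posI2 c hc
    rw [hhd] at hdc
    rw [sub_eq_zero, div_eq_div_iff p1.ne' p2.ne'] at hdc
    rw [hf1, hf2] at hdc
    linear_combination hdc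
  have hc1' : c1 ∈ Set.Icc x1 x3 := ⟨hc1.1.le, hc1.2.le.trans h23.le⟩
  have hc2' : c2 ∈ Set.Icc x1 x3 := ⟨h12.le.trans hc2.1.le, hc2.2.le⟩
  have e1 := crit c1 hc1' hdc1
  have e2 := crit c2 hc2' hdc2
  have k1 : B * A' ≠ 0 := mul_ne_zero hB hA'
  have e3 : Real.exp (-ρ * c1) * Real.exp (-ρ' * c2)
      = Real.exp (-ρ * c2) * Real.exp (-ρ' * c1) := by
    apply mul_left_cancel₀ k1
    linear_combination Real.exp (-ρ' * c2) * e1 - Real.exp (-ρ' * c1) * e2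
  rw [← Real.exp_add, ← Real.exp_add] at e3
  have e4 := Real.exp_injective e3
  have hcc : c1 < c2 := hc1.2.trans hc2.1
  apply hne
  have e5 : ρ * (c2 - c1) = ρ' * (c2 - c1) := by linear_combination e4
  exact mul_right_cancel₀ (sub_ne_zero.mpr hcc.ne') e5

/-- For three price pairs in general position (the points `(log p̂₁(t), log p̂₂(t))` pairwise
distinct and not collinear), there is at most one `ρ ∈ [-1,0) ∪ (0,∞)` for which the three
CES level curves have a common point, i.e. for which the determinant vanishes. -/
theorem at_most_one_rho_triple_intersection
    (q₁ q₂ : Fin 3 → ℝ) (hq₁ : ∀ t, 0 < q₁ t) (hq₂ : ∀ t, 0 < q₂ t)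
    (hdist : ∀ t t' : Fin 3, t ≠ t' →
      (Real.log (q₁ t), Real.log (q₂ t)) ≠ (Real.log (q₁ t'), Real.log (q₂ t')))
    (hnocol : ¬ Collinear ℝ
      {x : ℝ × ℝ | ∃ t : Fin 3, x = (Real.log (q₁ t), Real.log (q₂ t))}) :
    ∀ ρ ρ' : ℝ, ρ ∈ Set.Ico (-1:ℝ) 0 ∪ Set.Ioi 0 → ρ' ∈ Set.Ico (-1:ℝ) 0 ∪ Set.Ioi 0 →
      Matrix.det !![1, 1, 1;
        q₁ 0 ^ (-ρ), q₁ 1 ^ (-ρ), q₁ 2 ^ (-ρ);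
        q₂ 0 ^ (-ρ), q₂ 1 ^ (-ρ), q₂ 2 ^ (-ρ)] = 0 →
      Matrix.det !![1, 1, 1;
        q₁ 0 ^ (-ρ'), q₁ 1 ^ (-ρ'), q₁ 2 ^ (-ρ');
        q₂ 0 ^ (-ρ'), q₂ 1 ^ (-ρ'), q₂ 2 ^ (-ρ')] = 0 →
      ρ = ρ' := by
  intro ρ ρ' hρm hρ'm hdet hdet'
  by_contra hne
  set u : Fin 3 → ℝ := fun t => Real.log (q₁ t) with hu
  set v : Fin 3 → ℝ := fun t => Real.log (q₂ t) with hv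
  have hρ0 : ρ ≠ 0 := by
    rcases hρm with h | h
    · exact h.2.ne
    · exact (Set.mem_Ioi.mp h).ne'
  have hρ'0 : ρ' ≠ 0 := by
    rcases hρ'm with h | h
    · exact h.2.ne
    · exact (Set.mem_Ioi.mp h).ne'
  have e1 : ∀ (σ : ℝ) (t : Fin 3), q₁ t ^ (-σ) = Real.exp (-σ * u t) := fun σ t => by
    rw [Real.rpow_def_of_pos (hq₁ t), mul_comm]
  have e2 : ∀ (σ : ℝ) (t : Fin 3), q₂ t ^ (-σ) = Real.exp (-σ * v t) := fun σ t => by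
    rw [Real.rpow_def_of_pos (hq₂ t), mul_comm]
  rw [e1 ρ 0, e1 ρ 1, e1 ρ 2, e2 ρ 0, e2 ρ 1, e2 ρ 2] at hdet
  rw [e1 ρ' 0, e1 ρ' 1, e1 ρ' 2, e2 ρ' 0, e2 ρ' 1, e2 ρ' 2] at hdet'
  have hnocol' : ¬ Collinear ℝ {x : ℝ × ℝ | ∃ t : Fin 3, x = (u t, v t)} := hnocol
  obtain ⟨A, B, hA, hB, hrel⟩ := relation_of_det u v ρ hρ0 hnocol' hdet
  obtain ⟨A', B', hA', hB', hrel'⟩ := relation_of_det u v ρ' hρ'0 hnocol' hdet'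
  have huinj : ∀ t t' : Fin 3, t ≠ t' → u t ≠ u t' := by
    intro t t' htt' hEq
    have h1 : Real.exp (-ρ * v t) = Real.exp (-ρ * v t') := by
      rw [hrel t, hrel t', hEq]
    have h2 : v t = v t' :=
      mul_left_cancel₀ (neg_ne_zero.mpr hρ0) (Real.exp_injective h1)
    exact hdist t t' htt' (by rw [Prod.mk.injEq]; exact ⟨hEq, h2⟩)
  exact no_two_rho u v huinj ρ ρ' A B A' B' hρ0 hρ'0 hne hA hB hA' hB' hrel hrel'
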